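/- If λ₁ and λ₂ are two distinct eigenvalues of the random unitary operation Φ with |λ₁| = |λ₂| = 1, then the corresponding eigenspaces are orthogonal with respect to the Hilbert–Schmidt inner product: if Φ(X₁) = λ₁·X₁ and Φ(X₂) = λ₂·X₂, then Tr(X₁†·X₂) = 0. -/

import Mathlib

open Matrix BigOperators

open scoped InnerProductSpace in
lemma aux_hilbert {E : Type*} [NormedAddCommGroup E] [InnerProductSpace ℂ E]
    (T y : E) (μ : ℂ) (hμ : ‖μ‖ = 1) (hT : ‖T‖ ≤ ‖y‖)
    (hin : ⟪y, T⟫_ℂ = μ * ⟪y, y⟫_ℂ) : T = μ • y := by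
  have hnμ : ‖μ‖ = 1 := hμ
  have hTy : ⟪T, μ • y⟫_ℂ = (‖y‖ : ℂ) ^ 2 := by
    rw [inner_smul_right, ← inner_conj_symm, hin, _root_.map_mul, inner_conj_symm,
      inner_self_eq_norm_sq_to_K]
    have h1 : μ * (starRingEnd ℂ) μ = 1 := by
      rw [Complex.mul_conj]
      norm_cast
      simp [Complex.normSq_eq_norm_sq, hμ]
    calc μ * ((starRingEnd ℂ) μ * (‖y‖ : ℂ) ^ 2)
        = μ * (starRingEnd ℂ) μ * (‖y‖ : ℂ) ^ 2 := by ring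
      _ = (‖y‖ : ℂ) ^ 2 := by rw [h1, one_mul]
  have hre : RCLike.re ⟪T, μ • y⟫_ℂ = ‖y‖ ^ 2 := by
    rw [hTy, ← Complex.ofReal_pow]
    exact RCLike.ofReal_re (K := ℂ) _
  have hsq : ‖T - μ • y‖ ^ 2 ≤ 0 := by
    rw [norm_sub_sq (𝕜 := ℂ) T (μ • y), hre, norm_smul, hnμ, one_mul]
    nlinarith [norm_nonneg T, norm_nonneg y]
  have h0 : ‖T - μ • y‖ = 0 :=
    le_antisymm (by nlinarith [norm_nonneg (T - μ • y)]) (norm_nonneg _)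
  exact sub_eq_zero.mp (norm_eq_zero.mp h0)

open scoped InnerProductSpace

/-- vectorization of a matrix into Euclidean space -/
def vecE {d : ℕ} : Matrix (Fin d) (Fin d) ℂ →ₗ[ℂ] EuclideanSpace ℂ (Fin d × Fin d) where
  toFun A := WithLp.toLp 2 (fun ij : Fin d × Fin d => A ij.1 ij.2)
  map_add' _ _ := rfl
  map_smul' _ _ := rfl

lemma vecE_inj {d : ℕ} : Function.Injective (vecE (d := d)) := by
  intro A B h
  ext i j
  exact congrFun (congrArg WithLp.ofLp h) (i, j)

lemma inner_vecE {d : ℕ} (A B : Matrix (Fin d) (Fin d) ℂ) :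
    ⟪vecE A, vecE B⟫_ℂ = (Aᴴ * B).trace := by
  rw [PiLp.inner_apply]
  simp only [RCLike.inner_apply]
  rw [Matrix.trace, Fintype.sum_prod_type]
  simp only [Matrix.diag, Matrix.mul_apply, Matrix.conjTranspose_apply, vecE,
    LinearMap.coe_mk, AddHom.coe_mk, WithLp.ofLp_toLp]
  rw [Finset.sum_comm]
  simp [mul_comm]
  rfl

lemma vecE_norm_conj {d : ℕ} (V : Matrix (Fin d) (Fin d) ℂ)
    (hV : V ∈ Matrix.unitaryGroup (Fin d) ℂ) (X : Matrix (Fin d) (Fin d) ℂ) :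
    ‖vecE (V * X * Vᴴ)‖ = ‖vecE X‖ := by
  have h1 : Vᴴ * V = 1 := hV.1
  have key : ((V * X * Vᴴ)ᴴ * (V * X * Vᴴ)).trace = (Xᴴ * X).trace := by
    rw [conjTranspose_mul, conjTranspose_mul, conjTranspose_conjTranspose]
    have e1 : V * (Xᴴ * Vᴴ) * (V * X * Vᴴ) = V * (Xᴴ * X) * Vᴴ := by
      simp only [← Matrix.mul_assoc]
      rw [Matrix.mul_assoc (V * Xᴴ) Vᴴ V, h1, Matrix.mul_one]
    rw [e1, Matrix.trace_mul_comm, ← Matrix.mul_assoc, h1,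
      Matrix.one_mul]
  have hin : ⟪vecE (V * X * Vᴴ), vecE (V * X * Vᴴ)⟫_ℂ = ⟪vecE X, vecE X⟫_ℂ := by
    rw [inner_vecE, inner_vecE, key]
  rw [@norm_eq_sqrt_re_inner ℂ, @norm_eq_sqrt_re_inner ℂ, hin]

theorem stmt_7 {d m : ℕ} (hd : 1 ≤ d)
    (U : Fin m → Matrix (Fin d) (Fin d) ℂ)
    (hU : ∀ i, U i ∈ Matrix.unitaryGroup (Fin d) ℂ)
    (p : Fin m → ℝ) (hp : ∀ i, 0 < p i) (hpsum : ∑ i, p i = 1)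
    (Φ : Matrix (Fin d) (Fin d) ℂ → Matrix (Fin d) (Fin d) ℂ)
    (hΦ : ∀ ρ, Φ ρ = ∑ i, (p i : ℂ) • (U i * ρ * (U i)ᴴ))
    (lam₁ lam₂ : ℂ) (hne : lam₁ ≠ lam₂)
    (hlam₁ : ‖lam₁‖ = 1) (hlam₂ : ‖lam₂‖ = 1)
    (X₁ X₂ : Matrix (Fin d) (Fin d) ℂ)
    (h₁ : Φ X₁ = lam₁ • X₁) (h₂ : Φ X₂ = lam₂ • X₂) :
    (X₁ᴴ * X₂).trace = 0 := by
  classical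
  set Ψ : Matrix (Fin d) (Fin d) ℂ → Matrix (Fin d) (Fin d) ℂ :=
    fun y => ∑ i, (p i : ℂ) • ((U i)ᴴ * y * U i) with hΨ
  have term : ∀ (W : Matrix (Fin d) (Fin d) ℂ) (c : ℂ) (x y : Matrix (Fin d) (Fin d) ℂ),
      ((c • (W * x * Wᴴ))ᴴ * y).trace = (xᴴ * (star c • (Wᴴ * y * W))).trace := by
    intro W c x y
    rw [Matrix.conjTranspose_smul, Matrix.smul_mul, Matrix.trace_smul, Matrix.mul_smul,
      Matrix.trace_smul]
    congr 1
    rw [conjTranspose_mul, conjTranspose_mul, conjTranspose_conjTranspose,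
      Matrix.mul_assoc W (xᴴ * Wᴴ) y, Matrix.trace_mul_comm W]
    simp only [Matrix.mul_assoc]
  have hadj : ∀ x y : Matrix (Fin d) (Fin d) ℂ,
      ((Φ x)ᴴ * y).trace = (xᴴ * Ψ y).trace := by
    intro x y
    rw [hΦ, hΨ, Matrix.conjTranspose_sum, Matrix.sum_mul, Matrix.trace_sum, Matrix.mul_sum,
      Matrix.trace_sum]
    refine Finset.sum_congr rfl fun i _ => ?_
    simpa [Complex.conj_ofReal] using term (U i) ((p i : ℂ)) x y
  -- contraction property of Ψ in Frobenius norm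
  have hcontr : ∀ y : Matrix (Fin d) (Fin d) ℂ, ‖vecE (Ψ y)‖ ≤ ‖vecE y‖ := by
    intro y
    have : vecE (Ψ y) = ∑ i, (p i : ℂ) • vecE ((U i)ᴴ * y * U i) := by
      rw [hΨ]; simp [map_sum]
    rw [this]
    calc ‖∑ i, (p i : ℂ) • vecE ((U i)ᴴ * y * U i)‖
        ≤ ∑ i, ‖(p i : ℂ) • vecE ((U i)ᴴ * y * U i)‖ := norm_sum_le _ _
      _ = ∑ i, p i * ‖vecE y‖ := by
          refine Finset.sum_congr rfl fun i _ => ?_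
          rw [norm_smul]
          have hnorm : ‖vecE ((U i)ᴴ * y * U i)‖ = ‖vecE y‖ := by
            have := vecE_norm_conj (U i)ᴴ
              (by rw [← Matrix.star_eq_conjTranspose]; exact Unitary.star_mem (hU i)) y
            simpa using this
          rw [hnorm, Complex.norm_real, Real.norm_eq_abs, abs_of_pos (hp i)]
      _ = ‖vecE y‖ := by rw [← Finset.sum_mul, hpsum, one_mul]
  -- X₂ is an eigenvector of Ψ with eigenvalue conj lam₂
  have hΨX₂ : Ψ X₂ = (starRingEnd ℂ) lam₂ • X₂ := by
    have hin : ⟪vecE X₂, vecE (Ψ X₂)⟫_ℂ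
        = (starRingEnd ℂ) lam₂ * ⟪vecE X₂, vecE X₂⟫_ℂ := by
      rw [inner_vecE, inner_vecE, ← hadj, h₂, Matrix.conjTranspose_smul, Matrix.smul_mul,
        Matrix.trace_smul]
      rfl
    have := aux_hilbert (vecE (Ψ X₂)) (vecE X₂) ((starRingEnd ℂ) lam₂)
      (by simpa using hlam₂) (hcontr X₂) hin
    apply vecE_inj
    rw [LinearMap.map_smul]
    exact this
  -- conclude
  have key : (starRingEnd ℂ) lam₁ * (X₁ᴴ * X₂).trace
      = (starRingEnd ℂ) lam₂ * (X₁ᴴ * X₂).trace := by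
    have l1 : ((Φ X₁)ᴴ * X₂).trace = (starRingEnd ℂ) lam₁ * (X₁ᴴ * X₂).trace := by
      rw [h₁, Matrix.conjTranspose_smul, Matrix.smul_mul, Matrix.trace_smul]
      rfl
    have l2 : (X₁ᴴ * Ψ X₂).trace = (starRingEnd ℂ) lam₂ * (X₁ᴴ * X₂).trace := by
      rw [hΨX₂, Matrix.mul_smul, Matrix.trace_smul]
      rfl
    rw [← l1, ← l2, hadj]
  have hc : (starRingEnd ℂ) lam₁ ≠ (starRingEnd ℂ) lam₂ := fun h =>
    hne (by simpa using congrArg (starRingEnd ℂ) h)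
  by_contra h
  exact hc (mul_right_cancel₀ h key)
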